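/- Two motifs a and b from M^n are disjoint if and only if the motifs a^p and \overline{\overline{b}^p} from M^{2n} are disjoint. -/

import Mathlib

open MvPolynomial

/-- The field with two elements. -/
abbrev F2 := ZMod 2

/-- A motif indexed by `ι`: at each index it is `0`, `1`, or `*` (represented by `none`). -/
abbrev Motif (ι : Type*) := ι → Option F2

/-- The partial order on motifs: `a ≤ b` iff `a i = b i` for every index `i` with `b i ≠ *`. -/
def MotifLE {ι : Type*} (a b : Motif ι) : Prop :=
  ∀ (i : ι) (x : F2), b i = some x → a i = some x

/-- The variety of a motif: all words agreeing with the motif on its non-`*` coordinates. -/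
def variety {ι : Type*} (a : Motif ι) : Set (ι → F2) :=
  {w | ∀ (i : ι) (x : F2), a i = some x → w i = x}

/-- `a` is a motif of the code `C` iff its variety is contained in `C`. -/
def IsMotifOf {ι : Type*} (C : Set (ι → F2)) (a : Motif ι) : Prop :=
  variety a ⊆ C

/-- The set of maximal motifs of a code `C`. -/
def maxMot {ι : Type*} (C : Set (ι → F2)) : Set (Motif ι) :=
  {a | IsMotifOf C a ∧ ∀ b : Motif ι, IsMotifOf C b → MotifLE a b → a = b}

/-- Two motifs are disjoint if at some index both are non-`*` and they differ. -/
def DisjointMotifs {ι : Type*} (a b : Motif ι) : Prop :=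
  ∃ (i : ι) (x : F2), a i = some x ∧ b i = some (1 - x)

/-- Polarization of a motif of length `n`, as a motif of length `2n`
(indexed by `Fin n ⊕ Fin n`; `Sum.inl i` is coordinate `i`, `Sum.inr i` is coordinate `n+i`). -/
def polMotif {n : ℕ} (a : Motif (Fin n)) : Motif (Fin n ⊕ Fin n)
  | Sum.inl i => if a i = some 0 then some 0 else none
  | Sum.inr i => if a i = some 1 then some 0 else none

/-- The bar of a motif: `0 ↦ 1`, `1 ↦ 0`, `* ↦ *`. -/
def barMotif {ι : Type*} (a : Motif ι) : Motif ι :=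
  fun i => (a i).map (fun x => 1 - x)

/-- The polarization of a code `C ⊆ F₂ⁿ`: the union of the varieties of the
polarizations of the maximal motifs of `C`. -/
def polCode {n : ℕ} (C : Set (Fin n → F2)) : Set ((Fin n ⊕ Fin n) → F2) :=
  ⋃ a ∈ maxMot C, variety (polMotif a)

/-- The code `over-over-D-p` : the union of the varieties of `bar (pol (bar b))`
over the maximal motifs `b` of `D`. -/
def barPolBarCode {n : ℕ} (D : Set (Fin n → F2)) : Set ((Fin n ⊕ Fin n) → F2) :=
  ⋃ b ∈ maxMot D, variety (barMotif (polMotif (barMotif b)))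

/-- The formal polarization of a code `C`: the complement of `barPolBarCode` of `Cᶜ`. -/
def formalPol {n : ℕ} (C : Set (Fin n → F2)) : Set ((Fin n ⊕ Fin n) → F2) :=
  (barPolBarCode Cᶜ)ᶜ

/-- The Lagrange polynomial of a motif. -/
noncomputable def lagrange {ι : Type*} [Fintype ι] (a : Motif ι) : MvPolynomial ι F2 :=
  (∏ i ∈ Finset.univ.filter (fun i => a i = some 1), X i) *
    ∏ j ∈ Finset.univ.filter (fun j => a j = some 0), (1 - X j)

/-- The motif (with no stars) corresponding to a word. -/
def wordMotif {ι : Type*} (w : ι → F2) : Motif ι := fun i => some (w i)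

/-- The neural ideal of a code: generated by the Lagrange polynomials of the
words in the complement of the code. -/
noncomputable def neuralIdeal {ι : Type*} [Fintype ι] (C : Set (ι → F2)) :
    Ideal (MvPolynomial ι F2) :=
  Ideal.span ((fun w => lagrange (wordMotif w)) '' Cᶜ)

/-- The pseudo-monomial `∏_{i ∈ σ} X i * ∏_{j ∈ τ} (1 - X j)`. -/
noncomputable def pm {ι : Type*} (σ τ : Finset ι) : MvPolynomial ι F2 :=
  (∏ i ∈ σ, X i) * ∏ j ∈ τ, (1 - X j)

/-- A polynomial is a pseudo-monomial if it equals `pm σ τ` for disjoint `σ τ`. -/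
def IsPseudoMonomial {ι : Type*} (f : MvPolynomial ι F2) : Prop :=
  ∃ σ τ : Finset ι, Disjoint σ τ ∧ f = pm σ τ

/-- The canonical form of an ideal: the set of its minimal pseudo-monomials, i.e.
pseudo-monomials `f ∈ I` such that no pseudo-monomial `g ∈ I` of strictly smaller
degree divides `f`. -/
def CF {ι : Type*} (I : Ideal (MvPolynomial ι F2)) : Set (MvPolynomial ι F2) :=
  {f | IsPseudoMonomial f ∧ f ∈ I ∧
    ¬ ∃ g : MvPolynomial ι F2, IsPseudoMonomial g ∧ g ∈ I ∧
      g.totalDegree < f.totalDegree ∧ g ∣ f}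

/-- The polarization of the pseudo-monomial with data `(σ, τ)`:
`∏_{i ∈ σ} X i * ∏_{j ∈ τ} Y j` (here `Y j = X (Sum.inr j)`). -/
noncomputable def ppm {n : ℕ} (σ τ : Finset (Fin n)) : MvPolynomial (Fin n ⊕ Fin n) F2 :=
  (∏ i ∈ σ, X (Sum.inl i)) * ∏ j ∈ τ, X (Sum.inr j)

/-- `g` is the polarization of the pseudo-monomial `f`. -/
def PolPM {n : ℕ} (f : MvPolynomial (Fin n) F2) (g : MvPolynomial (Fin n ⊕ Fin n) F2) : Prop :=
  ∃ σ τ : Finset (Fin n), Disjoint σ τ ∧ f = pm σ τ ∧ g = ppm σ τ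

/-- The set of polarizations of the elements of a set of pseudo-monomials. -/
def polSet {n : ℕ} (S : Set (MvPolynomial (Fin n) F2)) :
    Set (MvPolynomial (Fin n ⊕ Fin n) F2) :=
  {g | ∃ f ∈ S, PolPM f g}

/-- The prime ideal of a motif: generated by `X i` for `a i = 0`
and `1 - X j` for `a j = 1`. -/
noncomputable def pIdeal {ι : Type*} (a : Motif ι) : Ideal (MvPolynomial ι F2) :=
  Ideal.span ({f | ∃ i, a i = some 0 ∧ f = X i} ∪ {f | ∃ j, a j = some 1 ∧ f = 1 - X j})
/-- `a` and `b` are disjoint iff `aᵖ` and `bar((bar b)ᵖ)` are disjoint. -/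
theorem disjoint_iff_polarized_disjoint {n : ℕ} (a b : Motif (Fin n)) :
    DisjointMotifs a b ↔
      DisjointMotifs (polMotif a) (barMotif (polMotif (barMotif b))) := by
  constructor
  · rintro ⟨i, x, ha, hb⟩
    have hx : x = 0 ∨ x = 1 := by fin_cases x <;> [exact Or.inl rfl; exact Or.inr rfl]
    rcases hx with rfl | rfl
    · refine ⟨Sum.inl i, 0, ?_, ?_⟩
      · simp [polMotif, ha]
      · simp [barMotif, polMotif, hb]
    · refine ⟨Sum.inr i, 0, ?_, ?_⟩
      · simp [polMotif, ha]
      · simp [barMotif, polMotif, hb]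
  · rintro ⟨(i | i), x, ha, hb⟩
    · have hx : x = 0 := by
        simp only [polMotif] at ha
        split at ha
        · exact (Option.some_injective _ ha.symm)
        · exact absurd ha (by simp)
      subst hx
      have ha' : a i = some 0 := by
        simp only [polMotif] at ha
        split at ha
        · assumption
        · exact absurd ha (by simp)
      have hb' : b i = some 1 := by
        simp only [barMotif, polMotif] at hb
        split_ifs at hb
        · rename_i h
          simp only [barMotif, Option.map_eq_some_iff] at h
          obtain ⟨y, hy, hy2⟩ := h
          have : y = 1 := by
            have hy3 : y = 0 ∨ y = 1 := by fin_cases y <;> [exact Or.inl rfl; exact Or.inr rfl]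
            rcases hy3 with rfl | rfl
            · exact absurd hy2 (by decide)
            · rfl
          rw [this] at hy; exact hy
        · exact absurd hb (by simp_all)
      exact ⟨i, 0, ha', by rw [hb']; decide⟩
    · have hx : x = 0 := by
        simp only [polMotif] at ha
        split at ha
        · exact (Option.some_injective _ ha.symm)
        · exact absurd ha (by simp)
      subst hx
      have ha' : a i = some 1 := by
        simp only [polMotif] at ha
        split at ha
        · assumption
        · exact absurd ha (by simp)
      have hb' : b i = some 0 := by
        simp only [barMotif, polMotif] at hb
        split_ifs at hb
        · rename_i h
          simp only [barMotif, Option.map_eq_some_iff] at h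
          obtain ⟨y, hy, hy2⟩ := h
          have : y = 0 := by
            have hy3 : y = 0 ∨ y = 1 := by fin_cases y <;> [exact Or.inl rfl; exact Or.inr rfl]
            rcases hy3 with rfl | rfl
            · rfl
            · exact absurd hy2 (by decide)
          rw [this] at hy; exact hy
        · exact absurd hb (by simp_all)
      exact ⟨i, 1, ha', by rw [hb']; decide⟩
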